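/- Fix n ≥ 2 and two distinct indices e₁, e₂ ∈ {1,…,n}. Let f be the randomized mechanism for n agents in the Euclidean plane that, given a profile x ∈ (ℝ²)ⁿ, returns the midpoint (x_{e₁}+x_{e₂})/2 with probability 1/2, the point x_{e₁} with probability 1/4, and the point x_{e₂} with probability 1/4. Then: (i) f is truthful in expectation; (ii) for every profile x, C(f,x) ≤ 2·opt(x); and (iii) for every profile x in which all n agents lie in the closed disk having the segment from x_{e₁} to x_{e₂} as a diameter (i.e., the prediction that e₁ and e₂ are the two extreme agents is correct), opt(x) = ‖x_{e₁}−x_{e₂}‖/2 and C(f,x) ≤ 1.5·opt(x). -/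
import Mathlib


open MeasureTheory

local notation "Pt" => EuclideanSpace ℝ (Fin 2)

lemma myIntegrable_dirac {g : Pt → ℝ} (hg : Continuous g) (p : Pt) :
    Integrable g (Measure.dirac p) := by
  refine ⟨hg.aestronglyMeasurable, ?_⟩
  rw [HasFiniteIntegral, lintegral_dirac' p (by fun_prop)]
  exact ENNReal.coe_lt_top

lemma integral_twoExtreme {g : Pt → ℝ} (hg : Continuous g) (m a b : Pt) :
    ∫ y, g y ∂((1/2 : ENNReal) • Measure.dirac m + (1/4 : ENNReal) • Measure.dirac a
      + (1/4 : ENNReal) • Measure.dirac b)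
      = (1/2) * g m + (1/4) * g a + (1/4) * g b := by
  have h2 : ((1:ENNReal)/2) ≠ ⊤ := by simp
  have h4 : ((1:ENNReal)/4) ≠ ⊤ := by simp
  rw [integral_add_measure
      (((myIntegrable_dirac hg m).smul_measure h2).add_measure
        ((myIntegrable_dirac hg a).smul_measure h4))
      ((myIntegrable_dirac hg b).smul_measure h4),
    integral_add_measure ((myIntegrable_dirac hg m).smul_measure h2)
      ((myIntegrable_dirac hg a).smul_measure h4),
    integral_smul_measure, integral_smul_measure, integral_smul_measure,
    integral_dirac' _ _ hg.stronglyMeasurable, integral_dirac' _ _ hg.stronglyMeasurable,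
    integral_dirac' _ _ hg.stronglyMeasurable]
  norm_num [ENNReal.toReal_div]

lemma continuous_supDist {n : ℕ} [Nonempty (Fin n)] (x : Fin n → Pt) :
    Continuous (fun y : Pt => ⨆ i, dist y (x i)) := by
  have h : (fun y : Pt => ⨆ i, dist y (x i))
      = fun y => Finset.univ.sup' Finset.univ_nonempty (fun i => dist y (x i)) := by
    funext y; rw [Finset.sup'_univ_eq_ciSup]
  rw [h]
  exact Continuous.finset_sup'_apply _ fun i _ => continuous_id.dist continuous_const

/-- The randomized mechanism for `n` agents in the Euclidean plane that, given the
(predicted) extreme agents `e₁, e₂`, returns the midpoint of `x e₁` and `x e₂` with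
probability `1/2` and each of `x e₁`, `x e₂` with probability `1/4`. -/
noncomputable def twoExtremeMech (n : ℕ) (e₁ e₂ : Fin n)
    (x : Fin n → EuclideanSpace ℝ (Fin 2)) : Measure (EuclideanSpace ℝ (Fin 2)) :=
  (1 / 2 : ENNReal) • Measure.dirac (midpoint ℝ (x e₁) (x e₂))
    + (1 / 4 : ENNReal) • Measure.dirac (x e₁)
    + (1 / 4 : ENNReal) • Measure.dirac (x e₂)

/-- the mechanism `twoExtremeMech` (i) is truthful in expectation,
(ii) is 2-robust (cost at most `2·opt(x)` on every profile), and (iii) on profiles where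
the prediction is correct, i.e. all agents lie in the closed disk with the segment from
`x e₁` to `x e₂` as a diameter, `opt(x) = ‖x e₁ - x e₂‖/2` and the cost is at most
`1.5·opt(x)`. -/
theorem stmt15 (n : ℕ) (hn : 2 ≤ n) (e₁ e₂ : Fin n) (hee : e₁ ≠ e₂) :
    -- (i) truthful in expectation
    (∀ (x : Fin n → EuclideanSpace ℝ (Fin 2)) (i : Fin n)
        (x' : EuclideanSpace ℝ (Fin 2)),
      ∫ y, dist y (x i) ∂(twoExtremeMech n e₁ e₂ x)
        ≤ ∫ y, dist y (x i) ∂(twoExtremeMech n e₁ e₂ (Function.update x i x'))) ∧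
    -- (ii) 2-robustness
    (∀ x : Fin n → EuclideanSpace ℝ (Fin 2),
      ∫ y, (⨆ i, dist y (x i)) ∂(twoExtremeMech n e₁ e₂ x)
        ≤ 2 * ⨅ y : EuclideanSpace ℝ (Fin 2), ⨆ i, dist y (x i)) ∧
    -- (iii) 1.5-consistency when the extreme-agent prediction is correct
    (∀ x : Fin n → EuclideanSpace ℝ (Fin 2),
      (∀ j, dist (x j) (midpoint ℝ (x e₁) (x e₂)) ≤ dist (x e₁) (x e₂) / 2) →
      (⨅ y : EuclideanSpace ℝ (Fin 2), ⨆ i, dist y (x i)) = dist (x e₁) (x e₂) / 2 ∧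
      ∫ y, (⨆ i, dist y (x i)) ∂(twoExtremeMech n e₁ e₂ x)
        ≤ 1.5 * ⨅ y : EuclideanSpace ℝ (Fin 2), ⨆ i, dist y (x i)) := by
  haveI : Nonempty (Fin n) := ⟨⟨0, by omega⟩⟩
  -- basic facts about the sup
  have hbdd : ∀ (x : Fin n → Pt) (y : Pt), BddAbove (Set.range fun i => dist y (x i)) :=
    fun x y => (Set.finite_range _).bddAbove
  have hle : ∀ (x : Fin n → Pt) (y : Pt) (i : Fin n), dist y (x i) ≤ ⨆ i, dist y (x i) :=
    fun x y i => le_ciSup (hbdd x y) i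
  have hS0 : ∀ (x : Fin n → Pt) (y : Pt), (0:ℝ) ≤ ⨆ i, dist y (x i) :=
    fun x y => le_trans dist_nonneg (hle x y e₁)
  have hdistc : ∀ p : Pt, Continuous (fun y : Pt => dist y p) :=
    fun p => continuous_id.dist continuous_const
  refine ⟨?_, ?_, ?_⟩
  · -- truthfulness
    intro x i x'
    by_cases h1 : i = e₁
    · subst h1
      have he2 : e₂ ≠ i := fun h => hee (h ▸ rfl)
      rw [twoExtremeMech, twoExtremeMech, integral_twoExtreme (hdistc _),
        integral_twoExtreme (hdistc _), Function.update_self, Function.update_of_ne he2]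
      set a := x i; set b := x e₂
      have k1 : dist (midpoint ℝ a b) a = dist a b / 2 := by
        rw [dist_midpoint_left, Real.norm_two]; ring
      have k2 : dist (midpoint ℝ x' b) b = dist x' b / 2 := by
        rw [dist_midpoint_right, Real.norm_two]; ring
      have t1 : dist a b ≤ dist a (midpoint ℝ x' b) + dist (midpoint ℝ x' b) b :=
        dist_triangle _ _ _
      have t2 : dist x' b ≤ dist x' a + dist a b := dist_triangle _ _ _
      have e1 : dist a (midpoint ℝ x' b) = dist (midpoint ℝ x' b) a := dist_comm _ _
      have e2 : dist x' a = dist a x' := dist_comm _ _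
      simp only [dist_self]
      linarith [k1, k2, t1, t2, e1, e2]
    · by_cases h2 : i = e₂
      · subst h2
        have he1 : e₁ ≠ i := hee
        rw [twoExtremeMech, twoExtremeMech, integral_twoExtreme (hdistc _),
          integral_twoExtreme (hdistc _), Function.update_self, Function.update_of_ne he1]
        set a := x e₁; set b := x i
        have k1 : dist (midpoint ℝ a b) b = dist a b / 2 := by
          rw [dist_midpoint_right, Real.norm_two]; ring
        have k2 : dist (midpoint ℝ a x') a = dist a x' / 2 := by
          rw [dist_midpoint_left, Real.norm_two]; ring
        have t1 : dist a b ≤ dist a (midpoint ℝ a x') + dist (midpoint ℝ a x') b :=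
          dist_triangle _ _ _
        have t2 : dist a x' ≤ dist a b + dist b x' := dist_triangle _ _ _
        have e1 : dist a (midpoint ℝ a x') = dist (midpoint ℝ a x') a := dist_comm _ _
        have e2 : dist b x' = dist x' b := dist_comm _ _
        have e3 : dist a b = dist b a := dist_comm _ _
        simp only [dist_self]
        linarith [k1, k2, t1, t2, e1, e2, e3]
      · have q1 : Function.update x i x' e₁ = x e₁ := Function.update_of_ne (Ne.symm h1) _ _
        have q2 : Function.update x i x' e₂ = x e₂ := Function.update_of_ne (Ne.symm h2) _ _
        rw [twoExtremeMech, twoExtremeMech, q1, q2]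
  · -- 2-robustness
    intro x
    set S : Pt → ℝ := fun y => ⨆ i, dist y (x i) with hS
    have hcont : Continuous S := continuous_supDist x
    rw [twoExtremeMech, integral_twoExtreme hcont]
    set a := x e₁; set b := x e₂; set m := midpoint ℝ a b
    have key : ∀ y : Pt, (1/2 * S m + 1/4 * S a + 1/4 * S b) / 2 ≤ S y := by
      intro y
      have hmy : dist m y ≤ S y := by
        have : dist m y ≤ (dist a y + dist b y) / 2 := by
          have := dist_midpoint_midpoint_le a b y y
          simpa [midpoint_self] using this
        have ha : dist a y ≤ S y := by rw [dist_comm]; exact hle x y e₁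
        have hb : dist b y ≤ S y := by rw [dist_comm]; exact hle x y e₂
        linarith
      have hay : dist a y ≤ S y := by rw [dist_comm]; exact hle x y e₁
      have hby : dist b y ≤ S y := by rw [dist_comm]; exact hle x y e₂
      have hSm : S m ≤ dist m y + S y := by
        apply ciSup_le; intro i
        calc dist m (x i) ≤ dist m y + dist y (x i) := dist_triangle _ _ _
          _ ≤ dist m y + S y := by linarith [hle x y i]
      have hSa : S a ≤ dist a y + S y := by
        apply ciSup_le; intro i
        calc dist a (x i) ≤ dist a y + dist y (x i) := dist_triangle _ _ _
          _ ≤ dist a y + S y := by linarith [hle x y i]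
      have hSb : S b ≤ dist b y + S y := by
        apply ciSup_le; intro i
        calc dist b (x i) ≤ dist b y + dist y (x i) := dist_triangle _ _ _
          _ ≤ dist b y + S y := by linarith [hle x y i]
      linarith
    have := le_ciInf key
    linarith [this]
  · -- consistency
    intro x hpred
    set S : Pt → ℝ := fun y => ⨆ i, dist y (x i) with hS
    have hcont : Continuous S := continuous_supDist x
    set a := x e₁; set b := x e₂; set m := midpoint ℝ a b
    set r := dist a b / 2 with hr
    have hSm : S m ≤ r := by
      apply ciSup_le; intro i
      rw [dist_comm]; exact hpred i
    have hlow : ∀ y : Pt, r ≤ S y := by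
      intro y
      have hay : dist y a ≤ S y := hle x y e₁
      have hby : dist y b ≤ S y := hle x y e₂
      have : dist a b ≤ dist y a + dist y b := by
        have := dist_triangle a y b
        rw [dist_comm a y] at this; linarith
      rw [hr]; linarith
    have hinf : (⨅ y : Pt, S y) = r := by
      apply le_antisymm
      · exact le_trans (ciInf_le ⟨0, fun v ⟨y, hy⟩ => hy ▸ hS0 x y⟩ m) hSm
      · exact le_ciInf hlow
    refine ⟨hinf, ?_⟩
    have ham : dist a m ≤ r := hpred e₁
    have hbm : dist b m ≤ r := hpred e₂
    have hSa : S a ≤ 2 * r := by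
      apply ciSup_le; intro i
      calc dist a (x i) ≤ dist a m + dist m (x i) := dist_triangle _ _ _
        _ ≤ r + r := by rw [dist_comm m (x i)]; exact add_le_add ham (hpred i)
        _ = 2 * r := by ring
    have hSb : S b ≤ 2 * r := by
      apply ciSup_le; intro i
      calc dist b (x i) ≤ dist b m + dist m (x i) := dist_triangle _ _ _
        _ ≤ r + r := by rw [dist_comm m (x i)]; exact add_le_add hbm (hpred i)
        _ = 2 * r := by ring
    rw [twoExtremeMech, integral_twoExtreme hcont, hinf]
    norm_num
    linarith
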